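/- For every p ≥ 2 there exists a constant C > 0 such that for every m ∈ ℕ and every smooth, compactly supported function F : ℝ³ → ℝ^m one has ‖F‖_{L^p(ℝ³)}^{2p/3} ≤ C (‖∇F‖_{L²(ℝ³)} + ‖F‖_{L²(ℝ³)}) · ‖F‖_{L^{(4p−6)/3}(ℝ³)}^{(2p−3)/3}. -/

import Mathlib

open scoped ContDiff ENNReal NNReal
open MeasureTheory

lemma opNorm_le_hs {m : ℕ} (L : EuclideanSpace ℝ (Fin 3) →L[ℝ] EuclideanSpace ℝ (Fin m)) :
    ‖L‖ ≤ Real.sqrt (∑ i : Fin 3, ‖L (EuclideanSpace.single i 1)‖ ^ 2) := by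
  apply ContinuousLinearMap.opNorm_le_bound _ (Real.sqrt_nonneg _)
  intro v
  have hv : v = ∑ i : Fin 3, v i • EuclideanSpace.single i 1 := by
    have := (EuclideanSpace.basisFun (Fin 3) ℝ).sum_repr v
    simp [EuclideanSpace.basisFun_apply, EuclideanSpace.basisFun_repr] at this
    exact this.symm
  calc ‖L v‖ = ‖∑ i : Fin 3, v i • L (EuclideanSpace.single i 1)‖ := by
        conv_lhs => rw [hv]
        rw [map_sum]
        simp
    _ ≤ ∑ i : Fin 3, ‖v i • L (EuclideanSpace.single i 1)‖ := norm_sum_le _ _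
    _ = ∑ i : Fin 3, |v i| * ‖L (EuclideanSpace.single i 1)‖ := by
        simp [norm_smul]
    _ ≤ Real.sqrt (∑ i : Fin 3, |v i| ^ 2) *
        Real.sqrt (∑ i : Fin 3, ‖L (EuclideanSpace.single i 1)‖ ^ 2) :=
        Real.sum_mul_le_sqrt_mul_sqrt _ _ _
    _ = Real.sqrt (∑ i : Fin 3, ‖L (EuclideanSpace.single i 1)‖ ^ 2) * ‖v‖ := by
        rw [EuclideanSpace.norm_eq v]
        simp [Real.norm_eq_abs, mul_comm]

/-- Pointwise Hilbert–Schmidt norm of the total derivative of `F : ℝ³ → ℝᵐ`. -/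
noncomputable def gradHSNorm {m : ℕ}
    (F : EuclideanSpace ℝ (Fin 3) → EuclideanSpace ℝ (Fin m))
    (x : EuclideanSpace ℝ (Fin 3)) : ℝ :=
  Real.sqrt (∑ i : Fin 3, ‖fderiv ℝ F x (EuclideanSpace.single i 1)‖ ^ 2)

set_option maxHeartbeats 1000000 in
/-- for every `p ≥ 2` there is `C > 0` such that for every smooth compactly
supported `F : ℝ³ → ℝᵐ`,
`‖F‖_{L^p}^{2p/3} ≤ C (‖∇F‖_{L²} + ‖F‖_{L²}) ‖F‖_{L^{(4p-6)/3}}^{(2p-3)/3}`. -/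
theorem stmt_5 (p : ℝ) (hp2 : 2 ≤ p) :
    ∃ C : ℝ, 0 < C ∧
      ∀ (m : ℕ) (F : EuclideanSpace ℝ (Fin 3) → EuclideanSpace ℝ (Fin m)),
        ContDiff ℝ ∞ F → HasCompactSupport F →
        ((∫ x, ‖F x‖ ^ p) ^ (1 / p)) ^ (2 * p / 3) ≤
          C * ((∫ x, gradHSNorm F x ^ (2 : ℝ)) ^ ((1 : ℝ) / 2)
              + (∫ x, ‖F x‖ ^ (2 : ℝ)) ^ ((1 : ℝ) / 2))
            * ((∫ x, ‖F x‖ ^ ((4 * p - 6) / 3)) ^ (3 / (4 * p - 6))) ^ ((2 * p - 3) / 3) := by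
  set K : ℝ≥0 := eLpNormLESNormFDerivOfEqInnerConst
      (volume : Measure (EuclideanSpace ℝ (Fin 3))) ((2:ℝ≥0) : ℝ) with hK
  refine ⟨(K : ℝ) + 1, by positivity, ?_⟩
  intro m F hF h2F
  have hp0 : (0:ℝ) < p := by linarith
  have hfc : Continuous F := hF.continuous
  set A := ∫ x, ‖F x‖ ^ p with hA
  set R := ∫ x, ‖F x‖ ^ ((4*p-6)/3) with hR
  set S := ∫ x, ‖F x‖ ^ (6:ℝ) with hS
  set B := ∫ x, ‖F x‖ ^ (2:ℝ) with hB
  set G := ∫ x, gradHSNorm F x ^ (2:ℝ) with hG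
  set D := ∫ x, ‖fderiv ℝ F x‖ ^ (2:ℝ) with hD
  have hA0 : 0 ≤ A := integral_nonneg fun x => Real.rpow_nonneg (norm_nonneg _) _
  have hR0 : 0 ≤ R := integral_nonneg fun x => Real.rpow_nonneg (norm_nonneg _) _
  have hS0 : 0 ≤ S := integral_nonneg fun x => Real.rpow_nonneg (norm_nonneg _) _
  have hB0 : 0 ≤ B := integral_nonneg fun x => Real.rpow_nonneg (norm_nonneg _) _
  have hG0 : 0 ≤ G := integral_nonneg fun x => Real.rpow_nonneg (Real.sqrt_nonneg _) _
  have hD0 : 0 ≤ D := integral_nonneg fun x => Real.rpow_nonneg (norm_nonneg _) _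
  -- continuity / support of rpow of the norm
  have hcont : ∀ s : ℝ, 0 ≤ s → Continuous fun x => ‖F x‖ ^ s := fun s hs =>
    (hfc.norm).rpow_const (fun x => Or.inr hs)
  have hsupp : ∀ s : ℝ, s ≠ 0 → HasCompactSupport fun x => ‖F x‖ ^ s := fun s hs => by
    have : (fun x => ‖F x‖ ^ s) = (fun y : EuclideanSpace ℝ (Fin m) => ‖y‖ ^ s) ∘ F := rfl
    rw [this]
    exact h2F.comp_left (by simp [Real.zero_rpow hs])
  -- Step 1 : Hölder, A ≤ R^(3/4) * S^(1/4)
  have holder := integral_mul_le_Lp_mul_Lq_of_nonneg (μ := volume)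
      (p := 4/3) (q := 4) ⟨by norm_num, by norm_num, by norm_num⟩
      (f := fun x => ‖F x‖ ^ (p - 3/2)) (g := fun x => ‖F x‖ ^ ((3:ℝ)/2))
      (Filter.Eventually.of_forall fun x => Real.rpow_nonneg (norm_nonneg _) _)
      (Filter.Eventually.of_forall fun x => Real.rpow_nonneg (norm_nonneg _) _)
      ((hcont _ (by linarith)).memLp_of_hasCompactSupport (hsupp _ (by intro h; nlinarith)))
      ((hcont _ (by norm_num)).memLp_of_hasCompactSupport (hsupp _ (by norm_num)))
  have e1 : ∀ x : EuclideanSpace ℝ (Fin 3),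
      ‖F x‖ ^ (p - 3/2) * ‖F x‖ ^ ((3:ℝ)/2) = ‖F x‖ ^ p := fun x => by
    rw [← Real.rpow_add_of_nonneg (norm_nonneg _) (by linarith) (by norm_num)]
    norm_num
  have e2 : ∀ x : EuclideanSpace ℝ (Fin 3),
      (‖F x‖ ^ (p - 3/2)) ^ ((4:ℝ)/3) = ‖F x‖ ^ ((4*p-6)/3) := fun x => by
    rw [← Real.rpow_mul (norm_nonneg _)]
    congr 1; ring
  have e3 : ∀ x : EuclideanSpace ℝ (Fin 3),
      (‖F x‖ ^ ((3:ℝ)/2)) ^ (4:ℝ) = ‖F x‖ ^ (6:ℝ) := fun x => by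
    rw [← Real.rpow_mul (norm_nonneg _)]
    norm_num
  simp_rw [e1, e2, e3] at holder
  have holder' : A ≤ R ^ ((3:ℝ)/4) * S ^ ((1:ℝ)/4) := by
    have h34 : (1:ℝ) / (4/3) = 3/4 := by norm_num
    rw [h34] at holder
    exact holder
  -- Step 2 : Sobolev, S^(1/6) ≤ K * D^(1/2)
  have hF1 : ContDiff ℝ 1 F := hF.of_le (by exact_mod_cast le_top)
  have sob := eLpNorm_le_eLpNorm_fderiv_of_eq_inner (p := 2) (p' := 6)
      (volume : Measure (EuclideanSpace ℝ (Fin 3))) hF1 h2F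
      (by norm_num) (by simp [finrank_euclideanSpace]) (by rw [finrank_euclideanSpace]; norm_num)
  have hmem6 : MemLp F ((6:ℝ≥0) : ℝ≥0∞) volume := hfc.memLp_of_hasCompactSupport h2F
  have hDcont : Continuous (fderiv ℝ F) := hF1.continuous_fderiv one_ne_zero
  have hDsupp : HasCompactSupport (fderiv ℝ F) := h2F.fderiv (𝕜 := ℝ)
  have hDmem : MemLp (fderiv ℝ F) ((2:ℝ≥0) : ℝ≥0∞) volume :=
    hDcont.memLp_of_hasCompactSupport hDsupp
  have h6 := hmem6.eLpNorm_eq_integral_rpow_norm (by norm_num) (by norm_num)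
  have h2e := hDmem.eLpNorm_eq_integral_rpow_norm (by norm_num) (by norm_num)
  have ht6 : (((6:ℝ≥0)) : ℝ≥0∞).toReal = (6:ℝ) := by norm_num
  have ht2 : (((2:ℝ≥0)) : ℝ≥0∞).toReal = (2:ℝ) := by norm_num
  rw [ht6] at h6
  rw [ht2] at h2e
  rw [h6, h2e] at sob
  have sobR : S ^ ((6:ℝ))⁻¹ ≤ (K:ℝ) * D ^ ((2:ℝ))⁻¹ := by
    rw [← ENNReal.ofReal_coe_nnreal, ← ENNReal.ofReal_mul K.coe_nonneg] at sob
    exact (ENNReal.ofReal_le_ofReal_iff (by positivity)).mp sob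
  -- D ≤ G
  have hGScont : Continuous (gradHSNorm F) := by
    unfold gradHSNorm
    exact Real.continuous_sqrt.comp
      (continuous_finset_sum _ fun i _ => ((hDcont.clm_apply continuous_const).norm.pow 2))
  have hGSsupp : HasCompactSupport (gradHSNorm F) := by
    have : gradHSNorm F = (fun L : EuclideanSpace ℝ (Fin 3) →L[ℝ] EuclideanSpace ℝ (Fin m) =>
        Real.sqrt (∑ i : Fin 3, ‖L (EuclideanSpace.single i 1)‖ ^ 2)) ∘ (fderiv ℝ F) := rfl
    rw [this]
    exact hDsupp.comp_left (by simp)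
  have hDG : D ≤ G := by
    refine integral_mono ?_ ?_ ?_
    · exact ((hDcont.norm).rpow_const fun x => Or.inr (by norm_num)).integrable_of_hasCompactSupport
        (hDsupp.norm.rpow_const (by norm_num))
    · exact ((hGScont.rpow_const fun x => Or.inr (by norm_num)).integrable_of_hasCompactSupport
        (hGSsupp.rpow_const (by norm_num)))
    · intro x
      exact Real.rpow_le_rpow (norm_nonneg _) (opNorm_le_hs _) (by norm_num)
  -- assemble
  have hL : (A ^ (1/p)) ^ (2*p/3) = A ^ ((2:ℝ)/3) := by
    rw [← Real.rpow_mul hA0]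
    congr 1
    field_simp
  have hRe : (R ^ (3/(4*p-6))) ^ ((2*p-3)/3) = R ^ ((1:ℝ)/2) := by
    rw [← Real.rpow_mul hR0]
    congr 1
    have h46 : 4*p-6 ≠ 0 := by nlinarith
    field_simp
    ring
  rw [hL, hRe]
  calc A ^ ((2:ℝ)/3) ≤ (R ^ ((3:ℝ)/4) * S ^ ((1:ℝ)/4)) ^ ((2:ℝ)/3) :=
        Real.rpow_le_rpow hA0 holder' (by norm_num)
    _ = R ^ ((1:ℝ)/2) * S ^ ((1:ℝ)/6) := by
        rw [Real.mul_rpow (by positivity) (by positivity), ← Real.rpow_mul hR0,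
          ← Real.rpow_mul hS0]
        norm_num
    _ ≤ R ^ ((1:ℝ)/2) * ((K:ℝ) * G ^ ((1:ℝ)/2)) := by
        refine mul_le_mul_of_nonneg_left ?_ (by positivity)
        calc S ^ ((1:ℝ)/6) = S ^ ((6:ℝ))⁻¹ := by norm_num
          _ ≤ (K:ℝ) * D ^ ((2:ℝ))⁻¹ := sobR
          _ ≤ (K:ℝ) * G ^ ((1:ℝ)/2) := by
              refine mul_le_mul_of_nonneg_left ?_ K.coe_nonneg
              rw [show ((2:ℝ))⁻¹ = 1/2 by norm_num]
              exact Real.rpow_le_rpow hD0 hDG (by norm_num)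
    _ ≤ ((K:ℝ) + 1) * (G ^ ((1:ℝ)/2) + B ^ ((1:ℝ)/2)) * R ^ ((1:ℝ)/2) := by
        have hG' : (0:ℝ) ≤ G ^ ((1:ℝ)/2) := by positivity
        have hB' : (0:ℝ) ≤ B ^ ((1:ℝ)/2) := by positivity
        have hR' : (0:ℝ) ≤ R ^ ((1:ℝ)/2) := by positivity
        have hK0 : (0:ℝ) ≤ K := K.coe_nonneg
        nlinarith [mul_nonneg hR' hG', mul_nonneg hR' hB',
          mul_nonneg (mul_nonneg hK0 hR') hB']
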